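/- For the two-qubit amplitude-damping-type channel with Kraus blocks E₁₁ = diag(1, 1−p₂), F₁₁ = diag(1, 1−p₂(1−p₁)), E₁₂ = diag(0, √(p₂(1−p₂))), F₁₂ = [[0, √(p₂(1−p₁))],[0,0]] and parameters 0 < p₁ < 1, 0 < p₂ < 1, taking λ₁₁ = 1 − p₂(1−p₁)/(2 − p₁ − p₂ + p₁p₂), the unit vectors ψ_E = (cos(θ_E/2), e^{iφ_E} sin(θ_E/2))ᵀ and ψ_F = (cos(θ_F/2), sin(θ_F/2))ᵀ with cos θ_E = (p₁ − p₂ + p₁p₂)/(2 − p₁ − p₂ + p₁p₂) and cos θ_F = (−p₁ − p₂ + p₁p₂)/(2 − p₁ − p₂ + p₁p₂) satisfy, for every φ_E ∈ [0, 2π): ⟨ψ_E, E₁₁ψ_E⟩ = ⟨ψ_F, F₁₁ψ_F⟩ = λ₁₁ and ⟨ψ_E, E₁₂ψ_E⟩ = ⟨ψ_F, F₁₂ψ_F⟩. -/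

import Mathlib

open Matrix Real

/-- Azimuthal angle θ_E for the amplitude-damping code. -/
noncomputable def thetaE (p₁ p₂ : ℝ) : ℝ :=
  Real.arccos ((p₁ - p₂ + p₁ * p₂) / (2 - p₁ - p₂ + p₁ * p₂))

/-- Azimuthal angle θ_F for the amplitude-damping code. -/
noncomputable def thetaF (p₁ p₂ : ℝ) : ℝ :=
  Real.arccos ((-p₁ - p₂ + p₁ * p₂) / (2 - p₁ - p₂ + p₁ * p₂))

/-- The code vector ψ_E. -/
noncomputable def psiE (p₁ p₂ φE : ℝ) : Fin 2 → ℂ :=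
  ![(Real.cos (thetaE p₁ p₂ / 2) : ℂ),
    Complex.exp (φE * Complex.I) * (Real.sin (thetaE p₁ p₂ / 2) : ℂ)]

/-- The code vector ψ_F. -/
noncomputable def psiF (p₁ p₂ : ℝ) : Fin 2 → ℂ :=
  ![(Real.cos (thetaF p₁ p₂ / 2) : ℂ), (Real.sin (thetaF p₁ p₂ / 2) : ℂ)]

theorem amplitude_damping_code
    (p₁ p₂ : ℝ) (h₁ : 0 < p₁) (h₁' : p₁ < 1) (h₂ : 0 < p₂) (h₂' : p₂ < 1)
    (E₁₁ F₁₁ E₁₂ F₁₂ : Matrix (Fin 2) (Fin 2) ℂ)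
    (hE11 : E₁₁ = !![1, 0; 0, ((1 - p₂ : ℝ) : ℂ)])
    (hF11 : F₁₁ = !![1, 0; 0, ((1 - p₂ * (1 - p₁) : ℝ) : ℂ)])
    (hE12 : E₁₂ = !![0, 0; 0, ((Real.sqrt (p₂ * (1 - p₂)) : ℝ) : ℂ)])
    (hF12 : F₁₂ = !![0, ((Real.sqrt (p₂ * (1 - p₁)) : ℝ) : ℂ); 0, 0])
    (lam : ℝ) (hlam : lam = 1 - p₂ * (1 - p₁) / (2 - p₁ - p₂ + p₁ * p₂)) :
    ∀ φE : ℝ, 0 ≤ φE → φE < 2 * π →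
      star (psiE p₁ p₂ φE) ⬝ᵥ psiE p₁ p₂ φE = 1 ∧
      star (psiF p₁ p₂) ⬝ᵥ psiF p₁ p₂ = 1 ∧
      star (psiE p₁ p₂ φE) ⬝ᵥ (E₁₁ *ᵥ psiE p₁ p₂ φE) = (lam : ℂ) ∧
      star (psiF p₁ p₂) ⬝ᵥ (F₁₁ *ᵥ psiF p₁ p₂) = (lam : ℂ) ∧
      star (psiE p₁ p₂ φE) ⬝ᵥ (E₁₂ *ᵥ psiE p₁ p₂ φE) =
        star (psiF p₁ p₂) ⬝ᵥ (F₁₂ *ᵥ psiF p₁ p₂) := by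
  intro φE _ _
  subst hE11 hF11 hE12 hF12 hlam
  have hD : (0:ℝ) < 2 - p₁ - p₂ + p₁ * p₂ := by nlinarith
  set D : ℝ := 2 - p₁ - p₂ + p₁ * p₂ with hDdef
  set cE := Real.cos (thetaE p₁ p₂ / 2) with hcEdef
  set sE := Real.sin (thetaE p₁ p₂ / 2) with hsEdef
  set cF := Real.cos (thetaF p₁ p₂ / 2) with hcFdef
  set sF := Real.sin (thetaF p₁ p₂ / 2) with hsFdef
  have hcosE : Real.cos (thetaE p₁ p₂) = (p₁ - p₂ + p₁ * p₂) / D := by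
    apply Real.cos_arccos
    · rw [le_div_iff₀ hD]; nlinarith
    · rw [div_le_one hD]; nlinarith
  have hcosF : Real.cos (thetaF p₁ p₂) = (-p₁ - p₂ + p₁ * p₂) / D := by
    apply Real.cos_arccos
    · rw [le_div_iff₀ hD]; nlinarith
    · rw [div_le_one hD]; nlinarith
  have h2E : 2 * (thetaE p₁ p₂ / 2) = thetaE p₁ p₂ := by ring
  have h2F : 2 * (thetaF p₁ p₂ / 2) = thetaF p₁ p₂ := by ring
  have hsE2 : sE ^ 2 = (1 - p₁) / D := by
    rw [hsEdef, Real.sin_sq_eq_half_sub, h2E, hcosE]; field_simp; ring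
  have hcE2 : cE ^ 2 = 1 - (1 - p₁) / D := by
    rw [hcEdef, Real.cos_sq, h2E, hcosE]; field_simp; ring
  have hsF2 : sF ^ 2 = 1 / D := by
    rw [hsFdef, Real.sin_sq_eq_half_sub, h2F, hcosF]; field_simp; ring
  have hcF2 : cF ^ 2 = (1 - p₁) * (1 - p₂) / D := by
    rw [hcFdef, Real.cos_sq, h2F, hcosF]; field_simp; ring
  -- sign facts for θ_F / 2
  have hFmem : thetaF p₁ p₂ ∈ Set.Icc (0:ℝ) π := ⟨Real.arccos_nonneg _, Real.arccos_le_pi _⟩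
  have hsFnn : 0 ≤ sF := by
    rw [hsFdef]
    exact Real.sin_nonneg_of_nonneg_of_le_pi (by linarith [hFmem.1])
      (by linarith [hFmem.2, Real.pi_pos])
  have hcFnn : 0 ≤ cF := by
    rw [hcFdef]
    apply Real.cos_nonneg_of_mem_Icc
    constructor
    · linarith [hFmem.1, Real.pi_pos]
    · linarith [hFmem.2]
  have hcFsF : cF * sF = Real.sqrt ((1 - p₁) * (1 - p₂)) / D := by
    have hnn : 0 ≤ cF * sF := mul_nonneg hcFnn hsFnn
    have hsq : (cF * sF) ^ 2 = ((1 - p₁) * (1 - p₂)) * (1 / D) ^ 2 := by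
      rw [mul_pow, hcF2, hsF2]; field_simp
    calc cF * sF = Real.sqrt ((cF * sF) ^ 2) := (Real.sqrt_sq hnn).symm
      _ = Real.sqrt (((1 - p₁) * (1 - p₂)) * (1 / D) ^ 2) := by rw [hsq]
      _ = Real.sqrt ((1 - p₁) * (1 - p₂)) * Real.sqrt ((1 / D) ^ 2) := by
          rw [Real.sqrt_mul (by nlinarith)]
      _ = Real.sqrt ((1 - p₁) * (1 - p₂)) / D := by
          rw [Real.sqrt_sq (by positivity)]; ring
  -- the key real identity for the fifth equation
  have hkey : Real.sqrt (p₂ * (1 - p₂)) * ((1 - p₁) / D) =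
      Real.sqrt (p₂ * (1 - p₁)) * (cF * sF) := by
    have harg : p₂ * (1 - p₁) * ((1 - p₁) * (1 - p₂)) = (1 - p₁) ^ 2 * (p₂ * (1 - p₂)) := by
      ring
    rw [hcFsF, ← mul_div_assoc, ← mul_div_assoc,
      ← Real.sqrt_mul (by nlinarith : (0:ℝ) ≤ p₂ * (1 - p₁)), harg,
      Real.sqrt_mul (show (0:ℝ) ≤ (1 - p₁) ^ 2 by positivity) (p₂ * (1 - p₂)),
      Real.sqrt_sq (show (0:ℝ) ≤ 1 - p₁ by linarith)]
    ring
  have hexp : (starRingEnd ℂ) (Complex.exp (↑φE * Complex.I)) * Complex.exp (↑φE * Complex.I)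
      = 1 := by
    rw [← Complex.exp_conj, ← Complex.exp_add, _root_.map_mul, Complex.conj_ofReal,
      Complex.conj_I]
    norm_num
  have hED : (D : ℝ) ≠ 0 := ne_of_gt hD
  refine ⟨?_, ?_, ?_, ?_, ?_⟩
  · simp only [psiE, dotProduct, Fin.sum_univ_two, Pi.star_apply, Matrix.cons_val_zero,
      Matrix.cons_val_one, Matrix.head_cons, RCLike.star_def, _root_.map_mul, Complex.conj_ofReal]
    have hr : cE ^ 2 + sE ^ 2 = 1 := by rw [hcE2, hsE2]; field_simp; ring
    have hr' : (cE : ℂ) * cE + (sE : ℂ) * sE = 1 := by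
      rw [show ((cE:ℂ) * cE + (sE:ℂ) * sE) = ((cE ^ 2 + sE ^ 2 : ℝ) : ℂ) by push_cast; ring, hr]
      norm_num
    linear_combination (sE : ℂ) * (sE : ℂ) * hexp + hr'
  · simp only [psiF, dotProduct, Fin.sum_univ_two, Pi.star_apply, Matrix.cons_val_zero,
      Matrix.cons_val_one, Matrix.head_cons, RCLike.star_def, Complex.conj_ofReal]
    have hr : cF ^ 2 + sF ^ 2 = 1 := by rw [hcF2, hsF2]; field_simp; ring
    have hr' : (cF : ℂ) * cF + (sF : ℂ) * sF = 1 := by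
      rw [show ((cF:ℂ) * cF + (sF:ℂ) * sF) = ((cF ^ 2 + sF ^ 2 : ℝ) : ℂ) by push_cast; ring, hr]
      norm_num
    exact hr'
  · simp only [psiE, Matrix.mulVec, dotProduct, Fin.sum_univ_two, Pi.star_apply,
      Matrix.cons_val_zero, Matrix.cons_val_one, Matrix.head_cons, Matrix.cons_val',
      Matrix.empty_val', Matrix.cons_val_fin_one, RCLike.star_def, _root_.map_mul,
      Complex.conj_ofReal, Matrix.of_apply, Matrix.head_fin_const]
    rw [← hcEdef, ← hsEdef]
    have hr3 : cE ^ 2 + (1 - p₂) * sE ^ 2 = 1 - p₂ * (1 - p₁) / D := by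
      rw [hcE2, hsE2]; field_simp; ring
    have hr3c : ((cE ^ 2 + (1 - p₂) * sE ^ 2 : ℝ) : ℂ) = ((1 - p₂ * (1 - p₁) / D : ℝ) : ℂ) := by
      exact_mod_cast congrArg Complex.ofReal hr3
    push_cast at hr3c ⊢
    linear_combination ((1 - (p₂:ℂ)) * (sE:ℂ) * (sE:ℂ)) * hexp + hr3c
  · simp only [psiF, Matrix.mulVec, dotProduct, Fin.sum_univ_two, Pi.star_apply,
      Matrix.cons_val_zero, Matrix.cons_val_one, Matrix.head_cons, Matrix.cons_val',
      Matrix.empty_val', Matrix.cons_val_fin_one, RCLike.star_def, _root_.map_mul,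
      Complex.conj_ofReal, Matrix.of_apply, Matrix.head_fin_const]
    rw [← hcFdef, ← hsFdef]
    have hr4 : cF ^ 2 + (1 - p₂ * (1 - p₁)) * sF ^ 2 = 1 - p₂ * (1 - p₁) / D := by
      rw [hcF2, hsF2]; field_simp; ring
    have hr4c : ((cF ^ 2 + (1 - p₂ * (1 - p₁)) * sF ^ 2 : ℝ) : ℂ)
        = ((1 - p₂ * (1 - p₁) / D : ℝ) : ℂ) := by
      exact_mod_cast congrArg Complex.ofReal hr4
    push_cast at hr4c ⊢
    linear_combination hr4c
  · simp only [psiE, psiF, Matrix.mulVec, dotProduct, Fin.sum_univ_two, Pi.star_apply,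
      Matrix.cons_val_zero, Matrix.cons_val_one, Matrix.head_cons, Matrix.cons_val',
      Matrix.empty_val', Matrix.cons_val_fin_one, RCLike.star_def, _root_.map_mul,
      Complex.conj_ofReal, Matrix.of_apply, Matrix.head_fin_const]
    rw [← hcEdef, ← hsEdef, ← hcFdef, ← hsFdef]
    have hr5 : Real.sqrt (p₂ * (1 - p₂)) * (sE * sE) = Real.sqrt (p₂ * (1 - p₁)) * (cF * sF) := by
      rw [show sE * sE = sE ^ 2 by ring, hsE2]; exact hkey
    have hr5c : ((Real.sqrt (p₂ * (1 - p₂)) * (sE * sE) : ℝ) : ℂ)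
        = ((Real.sqrt (p₂ * (1 - p₁)) * (cF * sF) : ℝ) : ℂ) := by
      exact_mod_cast congrArg Complex.ofReal hr5
    push_cast at hr5c ⊢
    linear_combination ((Real.sqrt (p₂ * (1 - p₂)) : ℂ) * (sE:ℂ) * (sE:ℂ)) * hexp + hr5c
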